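/- Let X_1,...,X_n take values in the non-negative integers. Then for every positive integer p, E[X_{r:n}^p] = \sum_{m=0}^{\infty} ((m+1)^p - m^p) \sum_{s=0}^{r-1} \sum_{S \subseteq {1,...,n}, |S| = s} P( (\cap_{i \in S} {X_i \le m}) \cap (\cap_{i \notin S} {X_i > m}) ). -/

import Mathlib

open MeasureTheory
open scoped ENNReal

/-- The `r`-th order statistic (r-th smallest, `r ∈ {1,...,n}`) of `X_1,...,X_n`. -/
noncomputable def orderStat {Ω : Type*} {n : ℕ} (r : ℕ) (X : Fin n → Ω → ℕ) (ω : Ω) : ℕ :=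
  sInf {m | r ≤ (Finset.univ.filter (fun i => X i ω ≤ m)).card}

lemma nat_telescope (p : ℕ) (hp : 1 ≤ p) (k : ℕ) :
    ∑ m ∈ Finset.range k, ((m + 1) ^ p - m ^ p) = k ^ p := by
  induction k with
  | zero => simp [Nat.zero_pow (by omega : 0 < p)]
  | succ k ih =>
    rw [Finset.sum_range_succ, ih]
    have := Nat.pow_le_pow_left (by omega : k ≤ k + 1) p
    omega

lemma orderStat_lt {Ω : Type*} {n : ℕ} (r : ℕ) (X : Fin n → Ω → ℕ)
    (hr : 1 ≤ r) (hrn : r ≤ n) (ω : Ω) (m : ℕ) :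
    m < orderStat r X ω ↔ (Finset.univ.filter (fun i => X i ω ≤ m)).card < r := by
  classical
  set S : Set ℕ := {k | r ≤ (Finset.univ.filter (fun i => X i ω ≤ k)).card} with hS
  have hmono : ∀ k k', k ≤ k' → k ∈ S → k' ∈ S := by
    intro k k' hkk hk
    have hsub : (Finset.univ.filter (fun i => X i ω ≤ k))
        ⊆ (Finset.univ.filter (fun i => X i ω ≤ k')) := by
      intro i hi
      simp only [Finset.mem_filter, Finset.mem_univ, true_and] at hi ⊢
      omega
    exact le_trans hk (Finset.card_le_card hsub)
  have hne : S.Nonempty := by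
    refine ⟨Finset.univ.sup (fun i => X i ω), ?_⟩
    have : (Finset.univ.filter (fun i => X i ω ≤ Finset.univ.sup (fun i => X i ω)))
        = Finset.univ := by
      apply Finset.filter_true_of_mem
      intro i _
      exact Finset.le_sup (f := fun i => X i ω) (Finset.mem_univ i)
    simp only [hS, Set.mem_setOf_eq, this, Finset.card_univ, Fintype.card_fin]
    exact hrn
  have key : m < sInf S ↔ m ∉ S := by
    constructor
    · intro h hm
      exact absurd (Nat.sInf_le hm) (by omega)
    · intro hm
      by_contra h
      push_neg at h
      exact hm (hmono _ _ h (Nat.sInf_mem hne))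
  rw [show orderStat r X ω = sInf S from rfl, key, hS, Set.mem_setOf_eq, not_le]

theorem stmt2 {Ω : Type*} [MeasurableSpace Ω] (μ : Measure Ω) [IsProbabilityMeasure μ]
    {n : ℕ} (X : Fin n → Ω → ℕ) (hX : ∀ i, Measurable (X i))
    (r : ℕ) (hr : 1 ≤ r) (hrn : r ≤ n) (p : ℕ) (hp : 1 ≤ p) :
    ∫⁻ ω, ((orderStat r X ω ^ p : ℕ) : ℝ≥0∞) ∂μ
      = ∑' m : ℕ, (((m + 1) ^ p - m ^ p : ℕ) : ℝ≥0∞) *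
          ∑ s ∈ Finset.range r, ∑ S ∈ Finset.powersetCard s (Finset.univ : Finset (Fin n)),
            μ {ω | ∀ i : Fin n, (i ∈ S → X i ω ≤ m) ∧ (i ∉ S → m < X i ω)} := by
  classical
  set A : ℕ → Finset (Fin n) → Set Ω :=
    fun m S => {ω | ∀ i : Fin n, (i ∈ S → X i ω ≤ m) ∧ (i ∉ S → m < X i ω)} with hA
  have hA_iff : ∀ m S ω, ω ∈ A m S ↔ Finset.univ.filter (fun i => X i ω ≤ m) = S := by
    intro m S ω
    simp only [hA, Set.mem_setOf_eq, Finset.ext_iff, Finset.mem_filter, Finset.mem_univ,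
      true_and]
    constructor
    · intro h i
      rcases h i with ⟨h1, h2⟩
      constructor
      · intro hle
        by_contra hi
        exact absurd hle (by have := h2 hi; omega)
      · exact h1
    · intro h i
      constructor
      · intro hi; exact (h i).2 hi
      · intro hi
        by_contra hle
        exact hi ((h i).1 (by omega))
  have hA_meas : ∀ m S, MeasurableSet (A m S) := by
    intro m S
    have : A m S = ⋂ i : Fin n,
        (if i ∈ S then {ω | X i ω ≤ m} else {ω | m < X i ω}) := by
      ext ω
      simp only [hA, Set.mem_setOf_eq, Set.mem_iInter]
      constructor
      · intro h i
        by_cases hi : i ∈ S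
        · simp [hi, (h i).1 hi]
        · simp [hi, (h i).2 hi]
      · intro h i
        constructor
        · intro hi; have := h i; simp [hi] at this; exact this
        · intro hi; have := h i; simp [hi] at this; exact this
    rw [this]
    refine MeasurableSet.iInter fun i => ?_
    by_cases hi : i ∈ S
    · rw [if_pos hi]; exact (hX i) measurableSet_Iic
    · rw [if_neg hi]; exact (hX i) measurableSet_Ioi
  -- the finset of "small" subsets
  set B : Finset (Finset (Fin n)) :=
    (Finset.range r).biUnion (fun s => Finset.powersetCard s (Finset.univ : Finset (Fin n)))
    with hB
  have hB_mem : ∀ S : Finset (Fin n), S ∈ B ↔ S.card < r := by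
    intro S
    simp only [hB, Finset.mem_biUnion, Finset.mem_range, Finset.mem_powersetCard]
    constructor
    · rintro ⟨s, hs, _, rfl⟩; exact hs
    · intro h; exact ⟨S.card, h, Finset.subset_univ S, rfl⟩
  -- union decomposition
  have hUnion : ∀ m : ℕ, {ω | m < orderStat r X ω} = ⋃ S ∈ B, A m S := by
    intro m
    ext ω
    rw [Set.mem_setOf_eq, orderStat_lt r X hr hrn ω m]
    simp only [Set.mem_iUnion]
    constructor
    · intro h
      refine ⟨Finset.univ.filter (fun i => X i ω ≤ m), (hB_mem _).2 h, ?_⟩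
      rw [hA_iff]
    · rintro ⟨S, hSB, hSω⟩
      rw [hA_iff] at hSω
      rw [hSω]
      exact (hB_mem _).1 hSB
  have hmeas_lt : ∀ m : ℕ, MeasurableSet {ω | m < orderStat r X ω} := by
    intro m
    rw [hUnion m]
    exact Finset.measurableSet_biUnion _ (fun S _ => hA_meas m S)
  -- measure of the union = double sum
  have hmeasure : ∀ m : ℕ, μ {ω | m < orderStat r X ω}
      = ∑ s ∈ Finset.range r, ∑ S ∈ Finset.powersetCard s (Finset.univ : Finset (Fin n)),
          μ (A m S) := by
    intro m
    rw [hUnion m]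
    rw [measure_biUnion_finset ?disj (fun S _ => hA_meas m S)]
    · rw [Finset.sum_biUnion]
      intro s hs t ht hst
      simp only [Finset.disjoint_left, Finset.mem_powersetCard]
      rintro S ⟨_, rfl⟩ ⟨_, h⟩
      omega
    case disj =>
      intro S hS T hT hST
      simp only [Function.onFun, Set.disjoint_left]
      intro ω hωS hωT
      rw [hA_iff] at hωS hωT
      exact hST (hωS.symm.trans hωT)
  -- pointwise layer-cake identity
  have hpointwise : ∀ ω : Ω, ((orderStat r X ω ^ p : ℕ) : ℝ≥0∞)
      = ∑' m : ℕ, Set.indicator {ω' | m < orderStat r X ω'}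
          (fun _ => (((m + 1) ^ p - m ^ p : ℕ) : ℝ≥0∞)) ω := by
    intro ω
    rw [tsum_eq_sum (s := Finset.range (orderStat r X ω)) (by
      intro m hm
      simp only [Finset.mem_range, not_lt] at hm
      exact Set.indicator_of_notMem (by simpa using not_lt.mpr hm) _)]
    have : ∀ m ∈ Finset.range (orderStat r X ω),
        Set.indicator {ω' | m < orderStat r X ω'}
          (fun _ => (((m + 1) ^ p - m ^ p : ℕ) : ℝ≥0∞)) ω
        = (((m + 1) ^ p - m ^ p : ℕ) : ℝ≥0∞) := by
      intro m hm
      simp only [Finset.mem_range] at hm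
      exact Set.indicator_of_mem (by simpa using hm) _
    rw [Finset.sum_congr rfl this, ← Nat.cast_sum]
    rw [nat_telescope p hp]
  calc ∫⁻ ω, ((orderStat r X ω ^ p : ℕ) : ℝ≥0∞) ∂μ
      = ∫⁻ ω, ∑' m : ℕ, Set.indicator {ω' | m < orderStat r X ω'}
          (fun _ => (((m + 1) ^ p - m ^ p : ℕ) : ℝ≥0∞)) ω ∂μ := by
        exact lintegral_congr hpointwise
    _ = ∑' m : ℕ, ∫⁻ ω, Set.indicator {ω' | m < orderStat r X ω'}
          (fun _ => (((m + 1) ^ p - m ^ p : ℕ) : ℝ≥0∞)) ω ∂μ := by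
        refine lintegral_tsum fun m => ?_
        exact (measurable_const.indicator (hmeas_lt m)).aemeasurable
    _ = ∑' m : ℕ, (((m + 1) ^ p - m ^ p : ℕ) : ℝ≥0∞) * μ {ω | m < orderStat r X ω} := by
        refine tsum_congr fun m => ?_
        rw [lintegral_indicator_const (hmeas_lt m)]
    _ = _ := by
        refine tsum_congr fun m => ?_
        rw [hmeasure m]
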